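/- Define J₀ : ℝ → ℝ by J₀(x) = ∫₀¹ cos(x·cos(2πs)) ds. Let φ : ℝ² → ℝ³ be an injective linear map, ℓ : ℝ² → ℝ a nonzero linear form, u ∈ ℝ² with ℓ(u) = 1, and w ∈ ker ℓ with w ≠ 0, such that ⟨φ(u), φ(w)⟩ = 0; set t = φ(u)/‖φ(u)‖ and n = (φ(u) × φ(w))/(‖φ(u)‖·‖φ(w)‖). Let η ≥ 0 and r = √(η + ‖φ(u)‖²). Suppose α ∈ [0, 2.4] satisfies r·J₀(α) = ‖φ(u)‖, and let θ ∈ [−α, α]. Then ‖r·(cos θ · t + sin θ · n) − φ(u)‖² ≤ 7η. -/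

import Mathlib

open scoped RealInnerProductSpace

noncomputable section

abbrev E2 := EuclideanSpace ℝ (Fin 2)
abbrev E3 := EuclideanSpace ℝ (Fin 3)

/-- The cross product of two vectors of Euclidean `ℝ³`. -/
noncomputable def cross (a b : E3) : E3 :=
  (WithLp.equiv 2 (Fin 3 → ℝ)).symm
    ![a 1 * b 2 - a 2 * b 1, a 2 * b 0 - a 0 * b 2, a 0 * b 1 - a 1 * b 0]

/-- The Bessel function of the first kind of order `0`. -/
noncomputable def J0 (x : ℝ) : ℝ :=
  ∫ s in (0:ℝ)..1, Real.cos (x * Real.cos (2 * Real.pi * s))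

/- Auxiliary lemmas -/

theorem sin_ge_sub_cube' {x : ℝ} (hx : 0 ≤ x) : x - x^3/6 ≤ Real.sin x := by
  have mono : MonotoneOn (fun z : ℝ => Real.sin z - (z - z^3/6)) (Set.Ici 0) := by
    apply monotoneOn_of_deriv_nonneg (convex_Ici 0)
    · fun_prop
    · fun_prop
    · intro z hz
      have hd : deriv (fun z : ℝ => Real.sin z - (z - z^3/6)) z
          = Real.cos z - (1 - z^2/2) := by
        have h1 : HasDerivAt (fun z : ℝ => Real.sin z - (z - z^3/6))
            (Real.cos z - (1 - 3*z^2/6)) z :=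
          (Real.hasDerivAt_sin z).sub (((hasDerivAt_id z).sub
            ((hasDerivAt_pow 3 z).div_const 6)).congr_deriv (by ring))
        rw [h1.deriv]; ring
      rw [hd]
      linarith [Real.one_sub_sq_div_two_le_cos (x := z)]
  have := mono Set.self_mem_Ici (Set.mem_Ici.2 hx) hx
  simpa using this

theorem cos_le_quartic (y : ℝ) : Real.cos y ≤ 1 - y^2/2 + y^4/24 := by
  wlog hy : 0 ≤ y with H
  · have := H (-y) (by linarith)
    rw [Real.cos_neg] at this
    nlinarith [this]
  have mono : MonotoneOn (fun z : ℝ => (1 - z^2/2 + z^4/24) - Real.cos z) (Set.Ici 0) := by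
    apply monotoneOn_of_deriv_nonneg (convex_Ici 0)
    · fun_prop
    · fun_prop
    · intro z hz
      have hz0 : 0 ≤ z := le_of_lt (by simpa using hz)
      have h1 : HasDerivAt (fun z : ℝ => (1 - z^2/2 + z^4/24) - Real.cos z)
          ((0 - 2*z/2 + 4*z^3/24) - (-Real.sin z)) z :=
        ((((hasDerivAt_const z (1:ℝ)).sub ((hasDerivAt_pow 2 z).div_const 2)).add
          ((hasDerivAt_pow 4 z).div_const 24)).sub (Real.hasDerivAt_cos z)).congr_deriv
          (by ring)
      rw [h1.deriv]
      have := sin_ge_sub_cube' hz0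
      nlinarith
  have := mono Set.self_mem_Ici (Set.mem_Ici.2 hy) hy
  simp at this
  linarith

theorem cos_sq_int : (∫ s in (0:ℝ)..1, Real.cos (2 * Real.pi * s) ^ 2) = 1/2 := by
  have h := intervalIntegral.integral_comp_mul_left (a := (0:ℝ)) (b := 1)
    (fun x => Real.cos x ^ 2) (c := 2 * Real.pi)
  have h2 : (2:ℝ) * Real.pi ≠ 0 := by positivity
  simp only [mul_zero, mul_one] at h
  rw [h h2, integral_cos_sq]
  have hpi : Real.pi ≠ 0 := Real.pi_ne_zero
  rw [Real.sin_two_pi]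
  simp
  field_simp

theorem J0_le (α : ℝ) (hα0 : 0 ≤ α) (hα1 : α ≤ 2.4) : J0 α ≤ 1 - α^2/4 + α^4/48 := by
  have hsq : α^2 ≤ 5.76 := by nlinarith
  have hK : 0 ≤ α^2/2 - α^4/24 := by nlinarith [sq_nonneg α, sq_nonneg (α^2)]
  have hmono : J0 α ≤ ∫ s in (0:ℝ)..1,
      (1 - (α^2/2 - α^4/24) * Real.cos (2 * Real.pi * s) ^ 2) := by
    apply intervalIntegral.integral_mono_on (by norm_num)
    · apply Continuous.intervalIntegrable; fun_prop
    · apply Continuous.intervalIntegrable; fun_prop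
    · intro s _
      have c2 : Real.cos (2 * Real.pi * s) ^ 2 ≤ 1 := Real.cos_sq_le_one _
      have c4 : Real.cos (2 * Real.pi * s) ^ 4 ≤ Real.cos (2 * Real.pi * s) ^ 2 := by
        nlinarith [sq_nonneg (Real.cos (2 * Real.pi * s))]
      have := cos_le_quartic (α * Real.cos (2 * Real.pi * s))
      have hα4 : 0 ≤ α^4 := by positivity
      nlinarith [mul_nonneg hα4 (sq_nonneg (Real.cos (2 * Real.pi * s)))]
  have hint : (∫ s in (0:ℝ)..1,
      (1 - (α^2/2 - α^4/24) * Real.cos (2 * Real.pi * s) ^ 2))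
      = 1 - (α^2/2 - α^4/24) * (1/2) := by
    rw [intervalIntegral.integral_sub (by apply Continuous.intervalIntegrable; fun_prop)
        (by apply Continuous.intervalIntegrable; fun_prop),
        intervalIntegral.integral_const_mul, cos_sq_int]
    simp
  rw [hint] at hmono
  linarith

theorem core_ineq (j c α : ℝ) (hj0 : 0 < j) (hj1 : j ≤ 1 - α^2/4 + α^4/48)
    (hc2 : 1 - α^2/2 ≤ c) (hα0 : 0 ≤ α) (hα1 : α ≤ 2.4) :
    4*j^2 - j*c ≤ 3 := by
  obtain ⟨x, hx⟩ : ∃ x : ℝ, x = α^2/4 := ⟨_, rfl⟩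
  obtain ⟨g, hg⟩ : ∃ g : ℝ, g = 1 - x + x^2/3 := ⟨_, rfl⟩
  have hx0 : 0 ≤ x := by rw [hx]; positivity
  have hx1 : x ≤ 1.44 := by rw [hx]; nlinarith
  have hjg : j ≤ g := by rw [hg, hx]; nlinarith
  have h1 : 4*j^2 - j*c ≤ 4*j^2 - j*(1-2*x) := by
    rw [hx]; nlinarith [mul_nonneg hj0.le (sub_nonneg.2 hc2)]
  have h2 : 4*j^2 - j*(1-2*x) ≤ 4*g^2 - g*(1-2*x) := by
    nlinarith [mul_nonneg (sub_nonneg.2 hjg)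
      (by nlinarith [hj0, sq_nonneg (2*x-3), hx0, hg] : (0:ℝ) ≤ 4*(g+j) - (1-2*x))]
  have h3 : 4*g^2 - g*(1-2*x) ≤ 3 := by
    rw [hg]
    nlinarith [mul_nonneg hx0 (mul_nonneg hx0 hx0), mul_nonneg hx0 hx0,
      mul_nonneg (mul_nonneg hx0 hx0) (sub_nonneg.2 hx1),
      mul_nonneg hx0 (sub_nonneg.2 hx1), sq_nonneg (x - 1)]
  linarith

lemma inner_cross_self (a b : E3) : ⟪a, cross a b⟫ = 0 := by
  simp [cross, PiLp.inner_apply, Fin.sum_univ_three, PiLp.toLp_apply]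
  ring

lemma norm_cross_sq (a b : E3) : ‖cross a b‖^2 = ‖a‖^2*‖b‖^2 - ⟪a,b⟫^2 := by
  rw [← real_inner_self_eq_norm_sq, ← real_inner_self_eq_norm_sq,
    ← real_inner_self_eq_norm_sq]
  simp [cross, PiLp.inner_apply, Fin.sum_univ_three, EuclideanSpace.norm_sq_eq, Real.norm_eq_abs, sq_abs]
  ring

set_option maxHeartbeats 800000 in
/-- The square of the displacement of `φ(u)` under a corrugation of amplitude `α`
is at most `7η`. -/
theorem stmt8 (φ : E2 →ₗ[ℝ] E3) (hφ : Function.Injective φ)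
    (ℓ : E2 →ₗ[ℝ] ℝ) (hℓ : ℓ ≠ 0)
    (u : E2) (hu : ℓ u = 1)
    (w : E2) (hw : ℓ w = 0) (hw0 : w ≠ 0)
    (horth : ⟪φ u, φ w⟫ = 0)
    (t n : E3)
    (ht : t = ‖φ u‖⁻¹ • φ u)
    (hn : n = (‖φ u‖ * ‖φ w‖)⁻¹ • cross (φ u) (φ w))
    (η : ℝ) (hη : 0 ≤ η)
    (r : ℝ) (hr : r = Real.sqrt (η + ‖φ u‖ ^ 2))
    (α : ℝ) (hα0 : 0 ≤ α) (hα1 : α ≤ 2.4)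
    (hJ : r * J0 α = ‖φ u‖)
    (θ : ℝ) (hθ1 : -α ≤ θ) (hθ2 : θ ≤ α) :
    ‖r • (Real.cos θ • t + Real.sin θ • n) - φ u‖ ^ 2 ≤ 7 * η := by
  set v : E3 := φ u with hv
  set z : E3 := φ w with hz
  have hu0 : u ≠ 0 := by
    intro h; rw [h] at hu; simp at hu
  have hP : 0 < ‖v‖ := by
    rw [norm_pos_iff]
    intro h
    exact hu0 (hφ (by rw [map_zero, ← hv]; exact h))
  have hQ : 0 < ‖z‖ := by
    rw [norm_pos_iff]
    intro h
    exact hw0 (hφ (by rw [map_zero, ← hz]; exact h))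
  set P : ℝ := ‖v‖ with hPdef
  set Q : ℝ := ‖z‖ with hQdef
  -- inner product facts
  have hvv : ⟪v, v⟫ = P^2 := real_inner_self_eq_norm_sq v
  have hvc : ⟪v, cross v z⟫ = 0 := inner_cross_self v z
  have hcc : ⟪cross v z, cross v z⟫ = P^2 * Q^2 := by
    rw [real_inner_self_eq_norm_sq, norm_cross_sq, horth]
    ring
  have htt : ⟪t, t⟫ = 1 := by
    rw [ht, real_inner_smul_left, real_inner_smul_right, hvv]
    field_simp
  have hnn : ⟪n, n⟫ = 1 := by
    rw [hn, real_inner_smul_left, real_inner_smul_right, hcc]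
    field_simp
  have htn : ⟪t, n⟫ = 0 := by
    rw [ht, hn, real_inner_smul_left, real_inner_smul_right, hvc]
    ring
  have htv : ⟪t, v⟫ = P := by
    rw [ht, real_inner_smul_left, hvv]
    field_simp
  have hnv : ⟪n, v⟫ = 0 := by
    rw [hn, real_inner_smul_left, real_inner_comm, hvc]
    ring
  have htn' : ⟪n, t⟫ = 0 := by rw [real_inner_comm]; exact htn
  have hvt : ⟪v, t⟫ = P := by rw [real_inner_comm]; exact htv
  have hvn : ⟪v, n⟫ = 0 := by rw [real_inner_comm]; exact hnv
  set c : ℝ := Real.cos θ with hc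
  set s : ℝ := Real.sin θ with hs
  have expand : ‖r • (c • t + s • n) - v‖ ^ 2
      = r^2*(c^2 + s^2) - 2*r*(c*P) + P^2 := by
    rw [← real_inner_self_eq_norm_sq]
    simp only [inner_sub_left, inner_sub_right, inner_add_left, inner_add_right,
      real_inner_smul_left, real_inner_smul_right]
    simp only [htt, hnn, htn, htn', htv, hnv, hvt, hvn, hvv]
    ring
  rw [expand]
  have hcs : c^2 + s^2 = 1 := by
    rw [hc, hs]; exact Real.cos_sq_add_sin_sq θ
  rw [hcs]
  -- scalar facts
  have hr0 : 0 < r := by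
    rw [hr]
    apply Real.sqrt_pos.2
    positivity
  have hr2 : r^2 = η + P^2 := by
    rw [hr, Real.sq_sqrt (by positivity)]
  set j : ℝ := J0 α with hj
  have hrj : r * j = P := hJ
  have hj0 : 0 < j := by
    by_contra h
    push_neg at h
    have h2 : r * j ≤ 0 := mul_nonpos_of_nonneg_of_nonpos hr0.le h
    linarith [hP, hrj]
  have hjle : j ≤ 1 - α^2/4 + α^4/48 := J0_le α hα0 hα1
  have hθsq : θ^2 ≤ α^2 := sq_le_sq' hθ1 hθ2
  have hc2 : 1 - α^2/2 ≤ c := by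
    have := Real.one_sub_sq_div_two_le_cos (x := θ)
    rw [← hc] at this
    linarith
  have hcore : 4*j^2 - j*c ≤ 3 := core_ineq j c α hj0 hjle hc2 hα0 hα1
  -- P = r*j, η = r^2 - P^2
  have hP2 : P^2 = r^2*j^2 := by rw [← hrj]; ring
  have key : (0:ℝ) ≤ r^2*(3 - (4*j^2 - j*c)) :=
    mul_nonneg (sq_nonneg r) (by linarith)
  have key2 : (0:ℝ) ≤ 3*r^2 - 4*(r^2*j^2) + r^2*(j*c) := by
    linarith [key, (by ring : r^2*(3 - (4*j^2 - j*c)) = 3*r^2 - 4*(r^2*j^2) + r^2*(j*c))]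
  have hη2 : η = r^2 - r^2*j^2 := by linarith [hr2, hP2]
  have hgoal_eq : r^2*1 - 2*r*(c*P) + P^2 = r^2 - 2*(r^2*(j*c)) + r^2*j^2 := by
    rw [← hrj]; ring
  rw [hgoal_eq]
  linarith [key2, hη2]

end
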